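/- Let $I=(t^{v_1},\dots,t^{v_q})$ be a monomial ideal of $S$ with incidence matrix $A$. Then $I$ is a normal ideal if and only if the linear system $x\ge 0;\, xA\ge 1$ has the integer rounding property, that is, for each $\alpha\in\mathbb{Z}^s$ for which $\max\{\langle y,1\rangle \mid y\ge 0,\ Ay\le\alpha\}$ is finite, one has $\max\{\langle y,1\rangle\mid y\in\mathbb{N}^q,\ Ay\le\alpha\} = \lfloor \max\{\langle y,1\rangle\mid y\ge 0,\ Ay\le\alpha\}\rfloor$. -/

import Mathlib

open MvPolynomial

/-- The monomial `t^a` in `K[t_1,…,t_s]`. -/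
noncomputable def mono (K : Type*) [Field K] {s : ℕ} (a : Fin s → ℕ) :
    MvPolynomial (Fin s) K :=
  MvPolynomial.monomial (Finsupp.equivFunOnFinite.symm a) 1

/-- The monomial ideal generated by the monomials `t^{v i}`. -/
noncomputable def monIdeal (K : Type*) [Field K] {s q : ℕ} (v : Fin q → Fin s → ℕ) :
    Ideal (MvPolynomial (Fin s) K) :=
  Ideal.span (Set.range fun i => mono K (v i))

/-- The integral closure of a monomial ideal `J`: the ideal generated by the
monomials `t^a` such that `(t^a)^p ∈ J^p` for some `p ≥ 1`. -/
noncomputable def intCl {K : Type*} [Field K] {s : ℕ}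
    (J : Ideal (MvPolynomial (Fin s) K)) : Ideal (MvPolynomial (Fin s) K) :=
  Ideal.span {m | (∃ a : Fin s → ℕ, m = mono K a) ∧ ∃ p : ℕ, 1 ≤ p ∧ m ^ p ∈ J ^ p}

/-- A monomial ideal is normal if `I^n` is integrally closed for all `n ≥ 1`. -/
def IsNormalIdeal {K : Type*} [Field K] {s : ℕ}
    (I : Ideal (MvPolynomial (Fin s) K)) : Prop :=
  ∀ n : ℕ, 1 ≤ n → intCl (I ^ n) = I ^ n

open Pointwise

open Finset in
lemma exists_orth_of_span_ne_top {q : ℕ} {J : Type*} [Fintype J] (c : J → Fin q → ℚ)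
    (h : Submodule.span ℚ (Set.range c) ≠ ⊤) :
    ∃ d : Fin q → ℚ, d ≠ 0 ∧ ∀ j, ∑ i, c j i * d i = 0 := by
  by_contra hcon
  push_neg at hcon
  apply h
  set M : Matrix J (Fin q) ℚ := Matrix.of c with hM
  have hker : LinearMap.ker M.mulVecLin = ⊥ := by
    rw [LinearMap.ker_eq_bot']
    intro d hd
    by_contra hd0
    obtain ⟨j, hj⟩ := hcon d hd0
    apply hj
    have := congrFun hd j
    simpa [Matrix.mulVecLin, Matrix.mulVec, dotProduct, hM] using this
  have hrank : M.rank = q := by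
    have := LinearMap.finrank_range_add_finrank_ker M.mulVecLin
    rw [hker, finrank_bot] at this
    simpa [Matrix.rank, Module.finrank_pi] using this
  have h2 : M.rank = Module.finrank ℚ (Submodule.span ℚ (Set.range c)) := by
    rw [Matrix.rank_eq_finrank_span_row]
    rfl
  apply Submodule.eq_top_of_finrank_eq
  rw [← h2, hrank, Module.finrank_pi]
  simp

section LP

variable {q : ℕ} {J : Type*} [Fintype J] [DecidableEq J]

open Finset in
lemma span_vanish (d : Fin q → ℚ) (S : Set (Fin q → ℚ))
    (hS : ∀ x ∈ S, ∑ i, x i * d i = 0) :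
    ∀ x ∈ Submodule.span ℚ S, ∑ i, x i * d i = 0 := by
  intro x hx
  induction hx using Submodule.span_induction with
  | mem x hx => exact hS x hx
  | zero => simp
  | add x y _ _ hx hy => simp [add_mul, Finset.sum_add_distrib, hx, hy]
  | smul a x _ hx =>
      simp only [Pi.smul_apply, smul_eq_mul, mul_assoc, ← Finset.mul_sum, hx, mul_zero]

open Finset in
lemma lp_attain (c : J → Fin q → ℚ) (b : J → ℚ) (u : Fin q → ℚ)
    (H : ∀ d : Fin q → ℚ, d ≠ 0 → ∃ j, 0 < ∑ i, c j i * d i)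
    (y0 : Fin q → ℚ) (hy0 : ∀ j, ∑ i, c j i * y0 i ≤ b j) :
    ∃ y : Fin q → ℚ, (∀ j, ∑ i, c j i * y i ≤ b j) ∧
      ∀ z : Fin q → ℚ, (∀ j, ∑ i, c j i * z i ≤ b j) →
        ∑ i, u i * z i ≤ ∑ i, u i * y i := by
  classical
  set P : (Fin q → ℚ) → Prop := fun y => ∀ j, ∑ i, c j i * y i ≤ b j with hP
  set T : (Fin q → ℚ) → Finset J :=
    fun y => univ.filter (fun j => ∑ i, c j i * y i = b j) with hT
  set W : (Fin q → ℚ) → Submodule ℚ (Fin q → ℚ) :=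
    fun y => Submodule.span ℚ (c '' ↑(T y)) with hW
  have hsum : ∀ (w d : Fin q → ℚ) (t : ℚ) (j : J),
      ∑ i, c j i * (w i + t * d i) = (∑ i, c j i * w i) + t * ∑ i, c j i * d i := by
    intro w d t j
    rw [Finset.mul_sum, ← Finset.sum_add_distrib]
    exact Finset.sum_congr rfl fun i _ => by ring
  -- the key descent step
  have step : ∀ y, P y → W y ≠ ⊤ → ∃ y', P y' ∧
      (∑ i, u i * y i ≤ ∑ i, u i * y' i) ∧ W y < W y' := by
    intro y hPy htop
    have hspan : Submodule.span ℚ (Set.range (fun j : (T y : Set J) => c j)) ≠ ⊤ := by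
      rwa [← Set.image_eq_range]
    obtain ⟨d0, hd0ne, hd0⟩ := exists_orth_of_span_ne_top _ hspan
    -- flip sign so the objective does not decrease
    obtain ⟨d, hdne, hdorth, hdu⟩ :
        ∃ d : Fin q → ℚ, d ≠ 0 ∧ (∀ j ∈ T y, ∑ i, c j i * d i = 0) ∧
          0 ≤ ∑ i, u i * d i := by
      rcases le_or_gt 0 (∑ i, u i * d0 i) with h | h
      · exact ⟨d0, hd0ne, fun j hj => hd0 ⟨j, hj⟩, h⟩
      · refine ⟨-d0, neg_ne_zero.mpr hd0ne, fun j hj => ?_, ?_⟩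
        · have := hd0 ⟨j, hj⟩
          simp only [Pi.neg_apply, mul_neg, Finset.sum_neg_distrib]
          linarith [this]
        · simp only [Pi.neg_apply, mul_neg, Finset.sum_neg_distrib]
          linarith
    obtain ⟨j0, hj0⟩ := H d hdne
    set B : Finset J := univ.filter (fun j => 0 < ∑ i, c j i * d i) with hB
    have hBne : B.Nonempty := ⟨j0, by simp [hB, hj0]⟩
    set ratio : J → ℚ := fun j => (b j - ∑ i, c j i * y i) / (∑ i, c j i * d i)
      with hratio
    obtain ⟨js, hjsB, hjsmin⟩ := B.exists_min_image ratio hBne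
    have hjsd : 0 < ∑ i, c js i * d i := by simpa [hB] using hjsB
    have hnotT : ∀ j ∈ B, j ∉ T y := by
      intro j hjB hjT
      have h1 := hdorth j hjT
      have h2 : 0 < ∑ i, c j i * d i := by simpa [hB] using hjB
      rw [h1] at h2; exact lt_irrefl _ h2
    have hslack : ∀ j ∈ B, 0 < b j - ∑ i, c j i * y i := by
      intro j hjB
      have h1 : ∑ i, c j i * y i ≤ b j := hPy j
      have h2 : ∑ i, c j i * y i ≠ b j := by
        intro hc
        exact hnotT j hjB (by simp [hT, hc])
      exact sub_pos.mpr (lt_of_le_of_ne h1 h2)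
    set t : ℚ := ratio js with ht
    have htpos : 0 < t := div_pos (hslack js hjsB) hjsd
    set y' : Fin q → ℚ := fun i => y i + t * d i with hy'
    have hy'sum : ∀ j, ∑ i, c j i * y' i = (∑ i, c j i * y i) + t * ∑ i, c j i * d i :=
      fun j => hsum y d t j
    have hPy' : P y' := by
      intro j
      rw [hy'sum j]
      rcases le_or_gt (∑ i, c j i * d i) 0 with h | h
      · nlinarith [hPy j]
      · have hjB : j ∈ B := by simp [hB, h]
        have := hjsmin j hjB
        rw [ht, hratio] at this
        have h2 : t * ∑ i, c j i * d i ≤ b j - ∑ i, c j i * y i := by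
          rw [ht]
          calc ratio js * ∑ i, c j i * d i ≤ ratio j * ∑ i, c j i * d i := by
                apply mul_le_mul_of_nonneg_right _ h.le
                exact hjsmin j hjB
            _ = b j - ∑ i, c j i * y i := by
                rw [hratio]
                field_simp
        linarith
    -- tight set grows
    have hTsub : T y ⊆ T y' := by
      intro j hj
      have h1 : ∑ i, c j i * y i = b j := by simpa [hT] using hj
      have h2 := hdorth j hj
      simp [hT, hy'sum j, h1, h2]
    have hjsT' : js ∈ T y' := by
      have : ∑ i, c js i * y' i = b js := by
        rw [hy'sum js, ht, hratio, div_mul_cancel₀]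
        · ring
        · exact ne_of_gt hjsd
      simp [hT, this]
    have hlt : W y < W y' := by
      refine lt_of_le_of_ne (Submodule.span_mono (Set.image_mono (by exact_mod_cast hTsub))) ?_
      intro hc
      have hjsmem : c js ∈ W y' := Submodule.subset_span ⟨js, by exact_mod_cast hjsT', rfl⟩
      rw [← hc] at hjsmem
      have := span_vanish d (c '' ↑(T y)) (by
        rintro x ⟨j, hj, rfl⟩
        exact hdorth j (by exact_mod_cast hj)) (c js) hjsmem
      rw [this] at hjsd
      exact lt_irrefl _ hjsd
    refine ⟨y', hPy', ?_, hlt⟩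
    have : ∑ i, u i * y' i = (∑ i, u i * y i) + t * ∑ i, u i * d i := by
      rw [hy', Finset.mul_sum, ← Finset.sum_add_distrib]
      exact Finset.sum_congr rfl fun i _ => by ring
    nlinarith
  -- descent to a "vertex"
  have descent : ∀ (m : ℕ) (y : Fin q → ℚ), P y → q - Module.finrank ℚ (W y) ≤ m →
      ∃ y', P y' ∧ (∑ i, u i * y i ≤ ∑ i, u i * y' i) ∧ W y' = ⊤ := by
    intro m
    induction m with
    | zero =>
        intro y hPy hm
        by_cases htop : W y = ⊤
        · exact ⟨y, hPy, le_refl _, htop⟩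
        · exfalso
          have h1 : Module.finrank ℚ (W y) < q := by
            have := Submodule.finrank_lt (s := W y) htop
            rwa [Module.finrank_pi, Fintype.card_fin] at this
          omega
    | succ m ih =>
        intro y hPy hm
        by_cases htop : W y = ⊤
        · exact ⟨y, hPy, le_refl _, htop⟩
        · obtain ⟨y', hPy', hobj, hlt⟩ := step y hPy htop
          have hrk : Module.finrank ℚ (W y) < Module.finrank ℚ (W y') :=
            Submodule.finrank_lt_finrank_of_lt hlt
          have hrk2 : Module.finrank ℚ (W y') ≤ q := by
            have := Submodule.finrank_le (W y')
            rwa [Module.finrank_pi, Fintype.card_fin] at this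
          obtain ⟨y'', h1, h2, h3⟩ := ih y' hPy' (by omega)
          exact ⟨y'', h1, le_trans hobj h2, h3⟩
  -- the set of vertices is finite
  set V : Set (Fin q → ℚ) := {y | P y ∧ W y = ⊤} with hV
  have hVfin : V.Finite := by
    have hinj : Set.InjOn T V := by
      intro y1 hy1 y2 hy2 hT12
      have hzero : ∀ x ∈ Submodule.span ℚ (c '' ↑(T y1)),
          ∑ i, x i * (y1 i - y2 i) = 0 := by
        apply span_vanish
        rintro x ⟨j, hj, rfl⟩
        have hj1 : ∑ i, c j i * y1 i = b j := by
          have := hj; simp only [hT, coe_filter, Set.mem_setOf_eq] at this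
          exact this.2
        have hj2 : ∑ i, c j i * y2 i = b j := by
          have hj' : j ∈ T y2 := hT12 ▸ (by exact_mod_cast hj)
          simp only [hT, mem_filter] at hj'
          exact hj'.2
        simp only [mul_sub, Finset.sum_sub_distrib, hj1, hj2, sub_self]
      funext i
      have hmem : (Pi.single i 1 : Fin q → ℚ) ∈ Submodule.span ℚ (c '' ↑(T y1)) := by
        rw [show Submodule.span ℚ (c '' ↑(T y1)) = W y1 from rfl, hy1.2]
        trivial
      have := hzero _ hmem
      have hs : ∑ i', (Pi.single i 1 : Fin q → ℚ) i' * (y1 i' - y2 i') =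
          y1 i - y2 i := by
        rw [Finset.sum_eq_single i]
        · simp
        · intro j _ hji; simp [Pi.single_apply, hji]
        · simp
      rw [hs] at this
      linarith
    exact Set.Finite.of_finite_image (Set.toFinite _) hinj
  have hVne : V.Nonempty := by
    obtain ⟨y', h1, _, h3⟩ := descent q y0 hy0 (Nat.sub_le _ _)
    exact ⟨y', h1, h3⟩
  obtain ⟨ymax, hymaxV, hymax⟩ :=
    Set.Finite.exists_maximalFor (fun y => ∑ i, u i * y i) V hVfin hVne
  refine ⟨ymax, hymaxV.1, ?_⟩
  intro z hz
  obtain ⟨z', hz'P, hz'obj, hz'top⟩ := descent q z hz (Nat.sub_le _ _)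
  have hz'V : z' ∈ V := ⟨hz'P, hz'top⟩
  rcases le_or_gt (∑ i, u i * z' i) (∑ i, u i * ymax i) with h | h
  · linarith
  · have := hymax hz'V h.le
    linarith
end LP

section Algebra

variable (K : Type*) [Field K] {s q : ℕ} (v : Fin q → Fin s → ℕ)

/-- exponent vectors of the generators, as finsupps -/
noncomputable def ev (i : Fin q) : Fin s →₀ ℕ := Finsupp.equivFunOnFinite.symm (v i)

/-- exponents appearing in the m-th power -/
def Epow (m : ℕ) : Set (Fin s →₀ ℕ) :=
  {e | ∃ z : Fin q → ℕ, (∑ i, z i) = m ∧ e = ∑ i, z i • ev v i}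

lemma ev_apply (i : Fin q) (k : Fin s) : ev v i k = v i k := rfl

lemma mono_eq_monomial (a : Fin s → ℕ) :
    mono K a = monomial (Finsupp.equivFunOnFinite.symm a) (1 : K) := rfl

open Finset in
lemma Epow_add_gen (m : ℕ) :
    Epow v m + Set.range (ev v) = Epow v (m + 1) := by
  ext e
  constructor
  · rintro ⟨e1, ⟨z, hz, rfl⟩, _, ⟨i0, rfl⟩, rfl⟩
    refine ⟨fun i => z i + (if i = i0 then 1 else 0), ?_, ?_⟩
    · rw [Finset.sum_add_distrib, hz, Finset.sum_ite_eq' univ i0 (fun _ => 1)]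
      simp
    · rw [show (fun i => z i + (if i = i0 then 1 else 0)) = fun i => z i + (if i = i0 then 1 else 0) from rfl]
      have : ∀ i, (z i + (if i = i0 then 1 else 0)) • ev v i
          = z i • ev v i + (if i = i0 then 1 else 0) • ev v i := fun i => add_smul _ _ _
      simp only [this, Finset.sum_add_distrib]
      congr 1
      rw [show (∑ i, (if i = i0 then 1 else 0) • ev v i) = ∑ i, (if i = i0 then ev v i else 0) from ?_]
      · rw [Finset.sum_ite_eq' univ i0 (fun i => ev v i)]
        simp
      · exact Finset.sum_congr rfl fun i _ => by split <;> simp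
  · rintro ⟨z, hz, rfl⟩
    have hne : ∃ i0, z i0 ≠ 0 := by
      by_contra hc
      push_neg at hc
      rw [Finset.sum_eq_zero (fun i _ => hc i)] at hz
      omega
    obtain ⟨i0, hi0⟩ := hne
    set w : Fin q → ℕ := Function.update z i0 (z i0 - 1) with hw
    have hsumw : ∀ (f : Fin q → ℕ → (Fin s →₀ ℕ)), True := fun _ => trivial
    refine ⟨∑ i, w i • ev v i, ⟨w, ?_, rfl⟩, ev v i0, ⟨i0, rfl⟩, ?_⟩
    · rw [Finset.sum_update_of_mem (mem_univ i0)]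
      have h := Finset.add_sum_erase univ z (mem_univ i0)
      rw [Finset.erase_eq] at h
      omega
    · have h1 : ∑ i, w i • ev v i
          = (z i0 - 1) • ev v i0 + ∑ i ∈ univ.erase i0, z i • ev v i := by
        rw [← Finset.add_sum_erase univ (fun i => w i • ev v i) (mem_univ i0)]
        congr 1
        · rw [hw, Function.update_self]
        · exact Finset.sum_congr rfl fun i hi =>
            by rw [hw, Function.update_of_ne (Finset.mem_erase.mp hi).1]
      have h2 : ∑ i, z i • ev v i
          = z i0 • ev v i0 + ∑ i ∈ univ.erase i0, z i • ev v i :=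
        (Finset.add_sum_erase univ (fun i => z i • ev v i) (mem_univ i0)).symm
      rw [h1, h2]
      have : z i0 • ev v i0 = (z i0 - 1) • ev v i0 + ev v i0 := by
        conv_lhs => rw [show z i0 = (z i0 - 1) + 1 from by omega]
        rw [add_smul, one_smul]
      rw [this]
      exact add_right_comm _ _ _

open Finset in
lemma monIdeal_pow_eq (m : ℕ) :
    (monIdeal K v) ^ m = Ideal.span ((fun e => monomial e (1 : K)) '' Epow v m) := by
  induction m with
  | zero =>
      rw [pow_zero, Ideal.one_eq_top]
      symm
      rw [Ideal.eq_top_iff_one]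
      apply Ideal.subset_span
      refine ⟨0, ⟨0, by simp, by simp⟩, by simp⟩
  | succ m ih =>
      rw [pow_succ, ih]
      have hI : monIdeal K v = Ideal.span ((fun e => monomial e (1 : K)) '' Set.range (ev v)) := by
        rw [monIdeal, ← Set.range_comp]
        rfl
      rw [hI, Ideal.span_mul_span']
      congr 1
      rw [← Epow_add_gen]
      ext x
      constructor
      · rintro ⟨x1, ⟨e1, he1, rfl⟩, x2, ⟨e2, he2, rfl⟩, rfl⟩
        exact ⟨e1 + e2, ⟨e1, he1, e2, he2, rfl⟩, by simp [monomial_mul]⟩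
      · rintro ⟨e, ⟨e1, he1, e2, he2, rfl⟩, rfl⟩
        exact ⟨monomial e1 1, ⟨e1, he1, rfl⟩, monomial e2 1, ⟨e2, he2, rfl⟩,
          by simp [monomial_mul]⟩

open Finset in
lemma mono_mem_pow_iff (a : Fin s → ℕ) (m : ℕ) :
    mono K a ∈ (monIdeal K v) ^ m ↔
      ∃ z : Fin q → ℕ, (∑ i, z i) = m ∧ ∀ k, ∑ i, z i * v i k ≤ a k := by
  classical
  rw [monIdeal_pow_eq, mono_eq_monomial, mem_ideal_span_monomial_image]
  rw [support_monomial]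
  simp only [if_neg (one_ne_zero (α := K)), Finset.mem_singleton, forall_eq]
  constructor
  · rintro ⟨e, ⟨z, hz, rfl⟩, hle⟩
    refine ⟨z, hz, fun k => ?_⟩
    have := hle k
    have hek : (∑ i, z i • ev v i) k = ∑ i, z i * v i k := by
      rw [Finsupp.finset_sum_apply]
      exact Finset.sum_congr rfl fun i _ => by
        rw [Finsupp.smul_apply, ev_apply, smul_eq_mul]
    rw [hek] at this
    simpa using this
  · rintro ⟨z, hz, hle⟩
    refine ⟨∑ i, z i • ev v i, ⟨z, hz, rfl⟩, ?_⟩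
    intro k
    have hek : (∑ i, z i • ev v i) k = ∑ i, z i * v i k := by
      rw [Finsupp.finset_sum_apply]
      exact Finset.sum_congr rfl fun i _ => by
        rw [Finsupp.smul_apply, ev_apply, smul_eq_mul]
    rw [hek]
    simpa using hle k

lemma mono_pow (a : Fin s → ℕ) (p : ℕ) :
    (mono K a) ^ p = mono K (fun k => p * a k) := by
  rw [mono_eq_monomial, mono_eq_monomial, monomial_pow, one_pow]
  have : p • Finsupp.equivFunOnFinite.symm a
      = Finsupp.equivFunOnFinite.symm (fun k => p * a k) := by
    ext k
    simp
  rw [this]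

open Finset in
lemma normal_iff_star :
    IsNormalIdeal (monIdeal K v) ↔
      ∀ n : ℕ, 1 ≤ n → ∀ a : Fin s → ℕ,
        (∃ p : ℕ, 1 ≤ p ∧ ∃ y : Fin q → ℕ,
          (∑ i, y i) = n * p ∧ ∀ k, ∑ i, y i * v i k ≤ p * a k) →
        ∃ z : Fin q → ℕ, (∑ i, z i) = n ∧ ∀ k, ∑ i, z i * v i k ≤ a k := by
  constructor
  · intro hnorm n hn a ⟨p, hp, y, hy1, hy2⟩
    have hmem : mono K a ∈ intCl ((monIdeal K v) ^ n) := by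
      apply Ideal.subset_span
      refine ⟨⟨a, rfl⟩, p, hp, ?_⟩
      rw [mono_pow, ← pow_mul]
      exact (mono_mem_pow_iff K v _ _).mpr ⟨y, hy1, hy2⟩
    rw [hnorm n hn] at hmem
    exact (mono_mem_pow_iff K v _ _).mp hmem
  · intro hstar n hn
    apply le_antisymm
    · rw [intCl, Ideal.span_le]
      rintro x ⟨⟨a, rfl⟩, p, hp, hpow⟩
      rw [mono_pow, ← pow_mul] at hpow
      obtain ⟨y, hy1, hy2⟩ := (mono_mem_pow_iff K v _ _).mp hpow
      exact (mono_mem_pow_iff K v a n).mpr (hstar n hn a ⟨p, hp, y, hy1, hy2⟩)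
    · conv_lhs => rw [monIdeal_pow_eq]
      rw [Ideal.span_le]
      rintro x ⟨e, he, rfl⟩
      apply Ideal.subset_span
      constructor
      · exact ⟨e, by rw [mono_eq_monomial, Finsupp.equivFunOnFinite_symm_coe]⟩
      · refine ⟨1, le_refl 1, ?_⟩
        rw [pow_one, pow_one, monIdeal_pow_eq]
        exact Ideal.subset_span ⟨e, he, rfl⟩

end Algebra

open Finset in
lemma exists_le_sum_eq {q : ℕ} :
    ∀ (k : ℕ) (w : Fin q → ℕ) (m : ℕ), m ≤ ∑ i, w i → ∑ i, w i - m = k →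
      ∃ w' : Fin q → ℕ, (∀ i, w' i ≤ w i) ∧ ∑ i, w' i = m := by
  intro k
  induction k with
  | zero =>
      intro w m h1 h2
      exact ⟨w, fun i => le_refl _, by omega⟩
  | succ k ih =>
      intro w m h1 h2
      have hlt : m < ∑ i, w i := by omega
      have hne : ∃ i0, w i0 ≠ 0 := by
        by_contra hc
        push_neg at hc
        rw [Finset.sum_eq_zero (fun i _ => hc i)] at hlt
        omega
      obtain ⟨i0, hi0⟩ := hne
      have hsum : ∑ i, Function.update w i0 (w i0 - 1) i = ∑ i, w i - 1 := by
        rw [Finset.sum_update_of_mem (Finset.mem_univ i0)]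
        have h := Finset.add_sum_erase univ w (Finset.mem_univ i0)
        rw [Finset.erase_eq] at h
        omega
      obtain ⟨w', hw1, hw2⟩ := ih (Function.update w i0 (w i0 - 1)) m (by omega) (by omega)
      refine ⟨w', fun i => ?_, hw2⟩
      rcases eq_or_ne i i0 with rfl | hne'
      · have := hw1 i
        rw [Function.update_self] at this
        omega
      · have := hw1 i
        rw [Function.update_of_ne hne'] at this
        omega

lemma exists_le_sum {q : ℕ} (w : Fin q → ℕ) (m : ℕ) (h : m ≤ ∑ i, w i) :
    ∃ w' : Fin q → ℕ, (∀ i, w' i ≤ w i) ∧ ∑ i, w' i = m :=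
  exists_le_sum_eq _ w m h rfl

open Finset in
theorem normal_iff_integer_rounding
    (K : Type*) [Field K] {s q : ℕ} (v : Fin q → Fin s → ℕ) :
    IsNormalIdeal (monIdeal K v) ↔
      ∀ (α : Fin s → ℤ) (r : ℚ),
        IsGreatest {c : ℚ | ∃ y : Fin q → ℚ, (∀ i, 0 ≤ y i) ∧
            (∀ k, (∑ i, y i * (v i k : ℚ)) ≤ (α k : ℚ)) ∧ c = ∑ i, y i} r →
        IsGreatest {c : ℚ | ∃ y : Fin q → ℕ,
            (∀ k, (∑ i, (y i : ℚ) * (v i k : ℚ)) ≤ (α k : ℚ)) ∧ c = ∑ i, (y i : ℚ)}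
          ((⌊r⌋ : ℤ) : ℚ) := by
  classical
  rw [normal_iff_star]
  constructor
  · -- star → rounding
    intro hstar α r hr
    obtain ⟨ystar, hpos, hfeas, hreq⟩ := hr.1
    have hα : ∀ k, 0 ≤ α k := by
      intro k
      have h0 : (0:ℚ) ≤ ∑ i, ystar i * (v i k : ℚ) :=
        Finset.sum_nonneg fun i _ => mul_nonneg (hpos i) (by positivity)
      exact_mod_cast le_trans h0 (hfeas k)
    set a : Fin s → ℕ := fun k => (α k).toNat with ha
    have haα : ∀ k, ((a k : ℤ)) = α k := fun k => Int.toNat_of_nonneg (hα k)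
    have haαQ : ∀ k, ((a k : ℚ)) = ((α k : ℤ) : ℚ) := by
      intro k
      exact_mod_cast congrArg (fun z : ℤ => (z : ℚ)) (haα k)
    have h0mem : (0:ℚ) ∈ {c : ℚ | ∃ y : Fin q → ℚ, (∀ i, 0 ≤ y i) ∧
        (∀ k, (∑ i, y i * (v i k : ℚ)) ≤ (α k : ℚ)) ∧ c = ∑ i, y i} := by
      refine ⟨0, fun i => le_refl 0, fun k => ?_, by simp⟩
      simp only [Pi.zero_apply, zero_mul, Finset.sum_const_zero]
      exact_mod_cast hα k
    have hr0 : (0:ℚ) ≤ r := hr.2 h0mem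
    set n : ℕ := (⌊r⌋).toNat with hn
    have hnr : ((n : ℤ)) = ⌊r⌋ := Int.toNat_of_nonneg (Int.floor_nonneg.mpr hr0)
    constructor
    · -- membership
      set p : ℕ := ∏ i, (ystar i).den with hp
      have hppos : 0 < p := Finset.prod_pos fun i _ => (ystar i).pos
      have hwex : ∀ i, ∃ wi : ℕ, (wi : ℚ) = (p:ℚ) * ystar i := by
        intro i
        have hdvd : (ystar i).den ∣ p := Finset.dvd_prod_of_mem _ (Finset.mem_univ i)
        have hden0 : (((ystar i).den : ℚ)) ≠ 0 := by
          exact_mod_cast (ystar i).pos.ne'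
        have hnum : ((ystar i).num : ℚ) = ystar i * ((ystar i).den : ℚ) :=
          (div_eq_iff hden0).mp (Rat.num_div_den _)
        have hnumnn : 0 ≤ (ystar i).num := Rat.num_nonneg.mpr (hpos i)
        refine ⟨(p / (ystar i).den) * (ystar i).num.toNat, ?_⟩
        have hcancel : ((p / (ystar i).den : ℕ) : ℚ) * (((ystar i).den : ℕ) : ℚ) = (p:ℚ) := by
          exact_mod_cast congrArg (fun t : ℕ => (t:ℚ)) (Nat.div_mul_cancel hdvd)
        have hcast : (((ystar i).num.toNat : ℕ) : ℚ) = (((ystar i).num : ℤ) : ℚ) := by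
          exact_mod_cast congrArg (fun t : ℤ => (t:ℚ)) (Int.toNat_of_nonneg hnumnn)
        push_cast
        rw [hcast, hnum]
        linear_combination ystar i * hcancel
      choose w hweq using hwex
      have hsumw : ((∑ i, w i : ℕ) : ℚ) = (p:ℚ) * r := by
        push_cast
        rw [hreq, Finset.mul_sum]
        exact Finset.sum_congr rfl fun i _ => hweq i
      have hfeasw : ∀ k, ∑ i, w i * v i k ≤ p * a k := by
        intro k
        have hQ : ((∑ i, w i * v i k : ℕ):ℚ) ≤ ((p * a k : ℕ):ℚ) := by
          push_cast
          calc ∑ i, (w i:ℚ) * (v i k:ℚ)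
              = (p:ℚ) * ∑ i, ystar i * (v i k:ℚ) := by
                rw [Finset.mul_sum]
                exact Finset.sum_congr rfl fun i _ => by rw [hweq i]; ring
            _ ≤ (p:ℚ) * ((α k : ℤ):ℚ) :=
                mul_le_mul_of_nonneg_left (hfeas k) (by positivity)
            _ = (p:ℚ) * ((a k : ℕ):ℚ) := by rw [haαQ k]
        exact_mod_cast hQ
      have hnp : n * p ≤ ∑ i, w i := by
        have h1 : (n:ℚ) ≤ r := by
          have h2 := Int.floor_le r
          rw [← hnr] at h2
          exact_mod_cast h2
        have hQ : ((n * p:ℕ):ℚ) ≤ ((∑ i, w i : ℕ):ℚ) := by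
          rw [hsumw]
          push_cast
          nlinarith [h1, (show (0:ℚ) < (p:ℚ) by exact_mod_cast hppos)]
        exact_mod_cast hQ
      obtain ⟨w', hw'le, hw'sum⟩ := exists_le_sum w (n*p) hnp
      have hfeasw' : ∀ k, ∑ i, w' i * v i k ≤ p * a k := fun k =>
        le_trans (Finset.sum_le_sum fun i _ => Nat.mul_le_mul_right _ (hw'le i)) (hfeasw k)
      rcases Nat.eq_zero_or_pos n with hn0 | hn1
      · refine ⟨0, fun k => ?_, ?_⟩
        · simp only [Pi.zero_apply, Nat.cast_zero, zero_mul, Finset.sum_const_zero]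
          exact_mod_cast hα k
        · rw [← hnr, hn0]
          simp
      · obtain ⟨z, hz1, hz2⟩ := hstar n hn1 a ⟨p, hppos, w', hw'sum, hfeasw'⟩
        refine ⟨z, fun k => ?_, ?_⟩
        · have hQ : ((∑ i, z i * v i k : ℕ):ℚ) ≤ ((a k:ℕ):ℚ) := by
            exact_mod_cast hz2 k
          push_cast at hQ
          rw [haαQ k] at hQ
          exact hQ
        · rw [← hnr, ← hz1]
          push_cast
          ring
    · -- upper bound
      rintro c ⟨y, hyf, rfl⟩
      have hymem : (∑ i, (y i : ℚ)) ∈ {c : ℚ | ∃ y : Fin q → ℚ, (∀ i, 0 ≤ y i) ∧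
          (∀ k, (∑ i, y i * (v i k : ℚ)) ≤ (α k : ℚ)) ∧ c = ∑ i, y i} :=
        ⟨fun i => (y i : ℚ), fun i => by positivity, hyf, rfl⟩
      have h1 : (∑ i, (y i:ℚ)) ≤ r := hr.2 hymem
      have h2 : ((∑ i, y i : ℕ) : ℚ) ≤ r := by push_cast; exact h1
      have h3 : ((∑ i, y i : ℕ) : ℤ) ≤ ⌊r⌋ := Int.le_floor.mpr (by exact_mod_cast h2)
      calc (∑ i, (y i:ℚ)) = ((∑ i, y i : ℕ) : ℚ) := by push_cast; ring
        _ ≤ ((⌊r⌋ : ℤ):ℚ) := by exact_mod_cast h3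
  · -- rounding → star
    intro hround n hn a ⟨p, hp, y, hy1, hy2⟩
    by_cases hzero : ∃ i0, v i0 = 0
    · obtain ⟨i0, hv0⟩ := hzero
      refine ⟨fun i => if i = i0 then n else 0, ?_, ?_⟩
      · rw [Finset.sum_ite_eq' Finset.univ i0 (fun _ => n)]
        simp
      · intro k
        have hterm : ∀ i, (if i = i0 then n else 0) * v i k = 0 := by
          intro i
          split
          · next h => subst h; simp [hv0]
          · simp
        simp only [hterm, Finset.sum_const_zero]
        exact Nat.zero_le _
    · push_neg at hzero
      set c : (Fin s ⊕ Fin q) → Fin q → ℚ :=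
        Sum.elim (fun k i => (v i k : ℚ)) (fun i' i => if i = i' then -1 else 0) with hc
      set b : (Fin s ⊕ Fin q) → ℚ := Sum.elim (fun k => (a k : ℚ)) (fun _ => 0) with hb
      have H : ∀ d : Fin q → ℚ, d ≠ 0 → ∃ j, 0 < ∑ i, c j i * d i := by
        intro d hd
        by_cases hneg : ∃ i', d i' < 0
        · obtain ⟨i', hi'⟩ := hneg
          refine ⟨Sum.inr i', ?_⟩
          have hsum : ∑ i, c (Sum.inr i') i * d i = -d i' := by
            simp only [hc, Sum.elim_inr]
            rw [Finset.sum_eq_single i']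
            · simp
            · intro j _ hj
              simp [hj]
            · simp
          rw [hsum]
          linarith
        · push_neg at hneg
          obtain ⟨i1, hi1⟩ := Function.ne_iff.mp hd
          have hi1pos : 0 < d i1 := lt_of_le_of_ne (hneg i1) (Ne.symm (by simpa using hi1))
          obtain ⟨k, hk⟩ := Function.ne_iff.mp (hzero i1)
          refine ⟨Sum.inl k, ?_⟩
          simp only [hc, Sum.elim_inl]
          apply Finset.sum_pos' (fun i _ => mul_nonneg (by positivity) (hneg i))
          refine ⟨i1, Finset.mem_univ i1, ?_⟩
          have hv : (0:ℚ) < (v i1 k : ℚ) := by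
            exact_mod_cast Nat.pos_of_ne_zero (by simpa using hk)
          exact mul_pos hv hi1pos
      have hy0 : ∀ j, ∑ i, c j i * (0 : Fin q → ℚ) i ≤ b j := by
        intro j
        cases j with
        | inl k => simp [hc, hb]
        | inr i' => simp [hc, hb]
      obtain ⟨ystar, hfeas, hmax⟩ := lp_attain c b (fun _ => (1:ℚ)) H 0 hy0
      set r : ℚ := ∑ i, ystar i with hrdef
      have hystar0 : ∀ i, 0 ≤ ystar i := by
        intro i
        have h1 : ∑ i', c (Sum.inr i) i' * ystar i' = -ystar i := by
          simp only [hc, Sum.elim_inr]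
          rw [Finset.sum_eq_single i]
          · simp
          · intro j _ hj
            simp [hj]
          · simp
        have h2 := hfeas (Sum.inr i)
        rw [h1] at h2
        simp only [hb, Sum.elim_inr] at h2
        linarith
      have hystarf : ∀ k, ∑ i, ystar i * (v i k:ℚ) ≤ (((fun k => (a k : ℤ)) k : ℤ):ℚ) := by
        intro k
        have h1 := hfeas (Sum.inl k)
        simp only [hc, hb, Sum.elim_inl] at h1
        have h2 : ∑ i, ystar i * (v i k:ℚ) = ∑ i, (v i k:ℚ) * ystar i :=
          Finset.sum_congr rfl fun i _ => mul_comm _ _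
        rw [h2]
        push_cast
        exact h1
      have hIG : IsGreatest {cc : ℚ | ∃ yy : Fin q → ℚ, (∀ i, 0 ≤ yy i) ∧
          (∀ k, (∑ i, yy i * (v i k : ℚ)) ≤ (((fun k => (a k : ℤ)) k : ℤ) : ℚ)) ∧
          cc = ∑ i, yy i} r := by
        constructor
        · exact ⟨ystar, hystar0, hystarf, rfl⟩
        · rintro cc ⟨z, hz0, hzf, rfl⟩
          have hfz : ∀ j, ∑ i, c j i * z i ≤ b j := by
            intro j
            cases j with
            | inl k =>
                simp only [hc, hb, Sum.elim_inl]
                have h2 : ∑ i, (v i k:ℚ) * z i = ∑ i, z i * (v i k:ℚ) :=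
                  Finset.sum_congr rfl fun i _ => mul_comm _ _
                rw [h2]
                have := hzf k
                push_cast at this ⊢
                exact this
            | inr i' =>
                simp only [hc, hb, Sum.elim_inr]
                have h1 : ∑ i, (if i = i' then (-1:ℚ) else 0) * z i = -z i' := by
                  rw [Finset.sum_eq_single i']
                  · simp
                  · intro j _ hj
                    simp [hj]
                  · simp
                rw [h1]
                linarith [hz0 i']
          have := hmax z hfz
          simpa using this
      have hIG2 := hround (fun k => (a k : ℤ)) r hIG
      obtain ⟨z, hzf, hzsum⟩ := hIG2.1
      have hppos : (0:ℚ) < (p:ℚ) := by exact_mod_cast hp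
      have hypmem : ((n:ℚ)) ∈ {cc : ℚ | ∃ yy : Fin q → ℚ, (∀ i, 0 ≤ yy i) ∧
          (∀ k, (∑ i, yy i * (v i k : ℚ)) ≤ (((fun k => (a k : ℤ)) k : ℤ) : ℚ)) ∧
          cc = ∑ i, yy i} := by
        refine ⟨fun i => (y i : ℚ) / p, fun i => by positivity, fun k => ?_, ?_⟩
        · have hyQ : ∑ i, (y i:ℚ)*(v i k:ℚ) ≤ (p:ℚ)*(a k:ℚ) := by
            have := hy2 k
            have hQ : ((∑ i, y i * v i k : ℕ):ℚ) ≤ ((p * a k : ℕ):ℚ) := by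
              exact_mod_cast this
            push_cast at hQ
            exact hQ
          have h2 : ∑ i, ((y i:ℚ)/p) * (v i k:ℚ) = (∑ i, (y i:ℚ)*(v i k:ℚ))/p := by
            rw [Finset.sum_div]
            exact Finset.sum_congr rfl fun i _ => by ring
          rw [h2]
          rw [div_le_iff₀ hppos]
          push_cast
          linarith [hyQ]
        · have h3 : ∑ i, (y i:ℚ) = (n:ℚ)*(p:ℚ) := by
            have : ((∑ i, y i : ℕ):ℚ) = ((n * p : ℕ):ℚ) := by exact_mod_cast hy1
            push_cast at this
            push_cast
            linarith [this]
          rw [← Finset.sum_div, h3, mul_div_assoc, div_self (ne_of_gt hppos), mul_one]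
      have hnrle : (n:ℚ) ≤ r := hIG.2 hypmem
      have hfl : (n:ℤ) ≤ ⌊r⌋ := Int.le_floor.mpr (by exact_mod_cast hnrle)
      have hnz : n ≤ ∑ i, z i := by
        have h4 : ((∑ i, z i:ℕ):ℚ) = ((⌊r⌋:ℤ):ℚ) := by
          push_cast
          rw [← hzsum]
        have h5 : ((∑ i, z i:ℕ):ℤ) = ⌊r⌋ := by exact_mod_cast h4
        omega
      obtain ⟨z', hz'le, hz'sum⟩ := exists_le_sum z n hnz
      refine ⟨z', hz'sum, fun k => ?_⟩
      have hQ : ((∑ i, z' i * v i k : ℕ):ℚ) ≤ ((a k:ℕ):ℚ) := by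
        push_cast
        calc ∑ i, (z' i:ℚ)*(v i k:ℚ) ≤ ∑ i, (z i:ℚ)*(v i k:ℚ) := by
              apply Finset.sum_le_sum
              intro i _
              have hle : (z' i:ℚ) ≤ (z i:ℚ) := by exact_mod_cast hz'le i
              exact mul_le_mul_of_nonneg_right hle (by positivity)
          _ ≤ (((fun k => (a k : ℤ)) k : ℤ) : ℚ) := hzf k
          _ = ((a k:ℕ):ℚ) := by push_cast; ring
      exact_mod_cast hQ
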